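/- arXiv:2001.09323 — 3 statements merged into one kernel-verified Lean document; each statement's English description precedes it below -/
import Mathlib

section
/- Let α ∈ ℂ and let ℓ, n be natural numbers. Then Σ_{k=0}^{n} α^{n−k} C(n,k) B_{ℓ+k}^{(α)} + (−1)^{ℓ+n+1} Σ_{k=0}^{ℓ} α^{ℓ−k} C(ℓ,k) B_{n+k}^{(α)} = 0, where B_m^{(α)} = B_m^{(α)}(0) are the generalized Bernoulli numbers. -/
open scoped BigOperators
open Polynomial Finset

noncomputable section

/-- The formal power series `(e^t - 1)/t` over `ℂ` (constant term `1`). -/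
def expSub1DivT : PowerSeries ℂ := PowerSeries.mk fun n => ((n + 1).factorial : ℂ)⁻¹

/-- The formal power series `t/(e^t - 1)` over `ℂ`. -/
def bernoulliBase : PowerSeries ℂ := expSub1DivT⁻¹

/-- The formal logarithm of a power series with constant term `1`:
`log F = ∑_{k ≥ 1} (-1)^(k+1) (F-1)^k / k`, computed coefficientwise
(only the terms with `k ≤ n` contribute to the `n`-th coefficient). -/
def formalLog (F : PowerSeries ℂ) : PowerSeries ℂ :=
  PowerSeries.mk fun n =>
    ∑ k ∈ Finset.range (n + 1),
      (-1 : ℂ) ^ (k + 1) * (k : ℂ)⁻¹ * PowerSeries.coeff n ((F - 1) ^ k)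

/-- The formal exponential of a power series with zero constant term:
`exp H = ∑_{k ≥ 0} H^k / k!`, computed coefficientwise. -/
def formalExp (H : PowerSeries ℂ) : PowerSeries ℂ :=
  PowerSeries.mk fun n =>
    ∑ k ∈ Finset.range (n + 1), ((k.factorial : ℂ))⁻¹ * PowerSeries.coeff n (H ^ k)

/-- `(t/(e^t - 1))^α := exp (α • log (t/(e^t - 1)))`. -/
def bernoulliBasePow (α : ℂ) : PowerSeries ℂ := formalExp (α • formalLog bernoulliBase)

/-- The generalized Bernoulli numbers `B_n^{(α)}`, defined by
`∑ B_n^{(α)} t^n / n! = (t/(e^t-1))^α`. -/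
def genBernoulliNumber (α : ℂ) (n : ℕ) : ℂ :=
  (n.factorial : ℂ) * PowerSeries.coeff n (bernoulliBasePow α)

/-- The generalized Bernoulli polynomials `B_n^{(α)}(x)`, defined by
`∑ B_n^{(α)}(x) t^n / n! = (t/(e^t-1))^α e^{t x}`; equivalently
`B_n^{(α)}(x) = ∑_{k ≤ n} C(n,k) B_k^{(α)} x^{n-k}`. -/
def genBernoulliPoly (α : ℂ) (n : ℕ) : Polynomial ℂ :=
  ∑ k ∈ Finset.range (n + 1),
    Polynomial.C ((n.choose k : ℂ) * genBernoulliNumber α k) * Polynomial.X ^ (n - k)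

/-- `Ω_γ`: the unique `ℂ`-linear endomorphism of `ℂ[X]` with `Ω_γ (X^n) = B_n^{(γ)}(X)`. -/
def OmegaOp (γ : ℂ) (P : Polynomial ℂ) : Polynomial ℂ :=
  P.sum fun n a => Polynomial.C a * genBernoulliPoly γ n

end

noncomputable section Aux

open PowerSeries

lemma coeff_mul_pow_eq_zero {H : PowerSeries ℂ} (hH : constantCoeff H = 0)
    (G : PowerSeries ℂ) {n k : ℕ} (h : n < k) : coeff n (G * H ^ k) = 0 := by
  have hX : (X : PowerSeries ℂ) ^ k ∣ G * H ^ k :=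
    Dvd.dvd.mul_left (pow_dvd_pow_of_dvd (X_dvd_iff.mpr hH) k) G
  exact X_pow_dvd_iff.mp hX n h

lemma coeff_pow_eq_zero {H : PowerSeries ℂ} (hH : constantCoeff H = 0)
    {n k : ℕ} (h : n < k) : coeff n (H ^ k) = 0 := by
  simpa using coeff_mul_pow_eq_zero hH 1 h

lemma coeff_formalExp {H : PowerSeries ℂ} (hH : constantCoeff H = 0) {n N : ℕ} (h : n < N) :
    coeff n (formalExp H) = coeff n (∑ k ∈ range N, (k.factorial : ℂ)⁻¹ • H ^ k) := by
  rw [formalExp, coeff_mk, map_sum]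
  simp only [PowerSeries.coeff_smul, smul_eq_mul]
  refine Finset.sum_subset (Finset.range_subset_range.mpr h) fun k _ hk => ?_
  rw [coeff_pow_eq_zero hH (by simpa using hk), mul_zero]

lemma coeff_formalLog {F : PowerSeries ℂ} (hF : constantCoeff F = 1) {n N : ℕ} (h : n < N) :
    coeff n (formalLog F) =
      coeff n (∑ k ∈ range N, ((-1 : ℂ) ^ (k + 1) * (k : ℂ)⁻¹) • (F - 1) ^ k) := by
  have hH : PowerSeries.constantCoeff (F - 1) = 0 := by simp [hF]
  rw [formalLog, coeff_mk, map_sum]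
  simp only [PowerSeries.coeff_smul, smul_eq_mul]
  refine Finset.sum_subset (Finset.range_subset_range.mpr h) fun k _ hk => ?_
  rw [coeff_pow_eq_zero hH (by simpa using hk), mul_zero]

lemma constantCoeff_formalExp (H : PowerSeries ℂ) : constantCoeff (formalExp H) = 1 := by
  rw [← coeff_zero_eq_constantCoeff_apply, formalExp, coeff_mk]
  simp

lemma constantCoeff_formalLog (F : PowerSeries ℂ) : constantCoeff (formalLog F) = 0 := by
  rw [← coeff_zero_eq_constantCoeff_apply, formalLog, coeff_mk]
  simp

lemma coeff_mul_formalExp {H : PowerSeries ℂ} (hH : constantCoeff H = 0)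
    (G : PowerSeries ℂ) {n N : ℕ} (h : n < N) :
    coeff n (G * formalExp H) =
      coeff n (G * ∑ k ∈ range N, (k.factorial : ℂ)⁻¹ • H ^ k) := by
  rw [PowerSeries.coeff_mul, PowerSeries.coeff_mul]
  refine Finset.sum_congr rfl fun ij hij => ?_
  have h2 : ij.2 ≤ n := by
    have := Finset.HasAntidiagonal.mem_antidiagonal.mp hij; omega
  rw [coeff_formalExp hH (lt_of_le_of_lt h2 h)]

lemma derivative_formalExp {H : PowerSeries ℂ} (hH : constantCoeff H = 0) :
    d⁄dX ℂ (formalExp H) = d⁄dX ℂ H * formalExp H := by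
  ext n
  rw [PowerSeries.coeff_derivative, coeff_formalExp hH (show n + 1 < n + 2 by omega), ← PowerSeries.coeff_derivative,
    coeff_mul_formalExp hH _ (show n < n + 1 by omega)]
  congr 1
  rw [map_sum, Finset.sum_range_succ']
  have h0 : d⁄dX ℂ (((Nat.factorial 0 : ℂ))⁻¹ • H ^ 0) = 0 := by
    simp
  rw [h0, add_zero, Finset.mul_sum]
  refine Finset.sum_congr rfl fun m _ => ?_
  rw [Derivation.map_smul, Derivation.leibniz_pow]
  simp only [smul_eq_mul, Nat.add_sub_cancel]
  rw [← Nat.cast_smul_eq_nsmul ℂ, smul_smul, mul_smul_comm]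
  congr 1
  · push_cast [Nat.factorial_succ]
    have hfac : ((m.factorial : ℂ)) ≠ 0 := Nat.cast_ne_zero.mpr m.factorial_ne_zero
    field_simp
  · exact mul_comm _ _


lemma mul_derivative_formalLog {F : PowerSeries ℂ} (hF : constantCoeff F = 1) :
    F * d⁄dX ℂ (formalLog F) = d⁄dX ℂ F := by
  have hH : PowerSeries.constantCoeff (F - 1) = 0 := by simp [hF]
  have hneg : PowerSeries.constantCoeff (-(F - 1)) = 0 := by simp [hF]
  ext n
  have step1 : coeff n (F * d⁄dX ℂ (formalLog F)) =
      coeff n (F * d⁄dX ℂ (∑ k ∈ range (n + 2),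
        ((-1 : ℂ) ^ (k + 1) * (k : ℂ)⁻¹) • (F - 1) ^ k)) := by
    rw [PowerSeries.coeff_mul, PowerSeries.coeff_mul]
    refine Finset.sum_congr rfl fun ij hij => ?_
    have h2 : ij.2 ≤ n := by have := Finset.HasAntidiagonal.mem_antidiagonal.mp hij; omega
    rw [PowerSeries.coeff_derivative, PowerSeries.coeff_derivative,
      coeff_formalLog hF (show ij.2 + 1 < n + 2 by omega)]
  have step2 : d⁄dX ℂ (∑ k ∈ range (n + 2),
      ((-1 : ℂ) ^ (k + 1) * (k : ℂ)⁻¹) • (F - 1) ^ k) =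
      d⁄dX ℂ F * ∑ m ∈ range (n + 1), (-(F - 1)) ^ m := by
    rw [map_sum, Finset.sum_range_succ']
    have h0 : d⁄dX ℂ (((-1 : ℂ) ^ (0 + 1) * ((0 : ℕ) : ℂ)⁻¹) • (F - 1) ^ 0) = 0 := by simp
    rw [h0, add_zero, Finset.mul_sum]
    refine Finset.sum_congr rfl fun m _ => ?_
    rw [Derivation.map_smul, Derivation.leibniz_pow]
    simp only [smul_eq_mul, Nat.add_sub_cancel]
    have hDsub : d⁄dX ℂ (F - 1) = d⁄dX ℂ F := by
      rw [map_sub, Derivation.map_one_eq_zero, sub_zero]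
    rw [hDsub, ← Nat.cast_smul_eq_nsmul ℂ, smul_smul]
    have h1 : ((m + 1 : ℕ) : ℂ) ≠ 0 := Nat.cast_ne_zero.mpr (Nat.succ_ne_zero m)
    have hscal : (-1 : ℂ) ^ (m + 1 + 1) * ((m + 1 : ℕ) : ℂ)⁻¹ * ((m + 1 : ℕ) : ℂ)
        = (-1 : ℂ) ^ m := by
      calc (-1 : ℂ) ^ (m + 1 + 1) * ((m + 1 : ℕ) : ℂ)⁻¹ * ((m + 1 : ℕ) : ℂ)
          = (-1 : ℂ) ^ (m + 1 + 1) * (((m + 1 : ℕ) : ℂ)⁻¹ * ((m + 1 : ℕ) : ℂ)) := by ring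
        _ = (-1 : ℂ) ^ (m + 1 + 1) := by rw [inv_mul_cancel₀ h1, mul_one]
        _ = (-1 : ℂ) ^ m := by rw [pow_succ, pow_succ]; ring
    rw [hscal, PowerSeries.smul_eq_C_mul, map_pow, map_neg, map_one,
      show (-(F - 1) : PowerSeries ℂ) = (-1) * (F - 1) by ring, mul_pow]
    ring
  rw [step1, step2]
  rw [show F * (d⁄dX ℂ F * ∑ m ∈ range (n + 1), (-(F - 1)) ^ m)
      = d⁄dX ℂ F * (F * ∑ m ∈ range (n + 1), (-(F - 1)) ^ m) by ring]
  have geom : F * ∑ m ∈ range (n + 1), (-(F - 1)) ^ m = 1 - (-(F - 1)) ^ (n + 1) := by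
    have hg := geom_sum_mul (-(F - 1)) (n + 1)
    have hx : (-(F - 1)) - 1 = -F := by ring
    calc F * ∑ m ∈ range (n + 1), (-(F - 1)) ^ m
        = -((∑ m ∈ range (n + 1), (-(F - 1)) ^ m) * ((-(F - 1)) - 1)) := by rw [hx]; ring
      _ = -((-(F - 1)) ^ (n + 1) - 1) := by rw [hg]
      _ = 1 - (-(F - 1)) ^ (n + 1) := by ring
  rw [geom, mul_sub, mul_one, map_sub, coeff_mul_pow_eq_zero hneg _ (by omega : n < n + 1),
    sub_zero]


lemma ode_unique {U P G1 G2 : PowerSeries ℂ} (hU : constantCoeff U ≠ 0)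
    (h1 : U * d⁄dX ℂ G1 = P * G1) (h2 : U * d⁄dX ℂ G2 = P * G2)
    (h0 : constantCoeff G1 = constantCoeff G2) : G1 = G2 := by
  suffices key : ∀ m : ℕ, coeff m G1 = coeff m G2 from PowerSeries.ext key
  intro m
  induction m using Nat.strong_induction_on with
  | _ m ih =>
    match m with
    | 0 => simpa [PowerSeries.coeff_zero_eq_constantCoeff] using h0
    | Nat.succ m =>
      have hP : coeff m (P * G1) = coeff m (P * G2) := by
        rw [PowerSeries.coeff_mul, PowerSeries.coeff_mul]
        refine Finset.sum_congr rfl fun ij hij => ?_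
        have h2 : ij.2 ≤ m := by have := Finset.HasAntidiagonal.mem_antidiagonal.mp hij; omega
        rw [ih ij.2 (by omega)]
      have hsum : ∑ ij ∈ Finset.HasAntidiagonal.antidiagonal m,
          coeff ij.1 U * (coeff ij.2 (d⁄dX ℂ G1) - coeff ij.2 (d⁄dX ℂ G2)) = 0 := by
        have e1 := congrArg (PowerSeries.coeff m) h1
        have e2 := congrArg (PowerSeries.coeff m) h2
        rw [PowerSeries.coeff_mul] at e1 e2
        simp only [mul_sub, Finset.sum_sub_distrib]
        rw [e1, e2, hP, sub_self]
      have hsingle : ∑ ij ∈ Finset.HasAntidiagonal.antidiagonal m,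
          coeff ij.1 U * (coeff ij.2 (d⁄dX ℂ G1) - coeff ij.2 (d⁄dX ℂ G2))
          = coeff 0 U * (coeff m (d⁄dX ℂ G1) - coeff m (d⁄dX ℂ G2)) := by
        refine Finset.sum_eq_single_of_mem ((0 : ℕ), m) (by simp) ?_
        intro ij hij hne
        have hd := Finset.HasAntidiagonal.mem_antidiagonal.mp hij
        have hj : ij.2 < m := by
          rcases Nat.lt_or_ge ij.2 m with h | h
          · exact h
          · exfalso; apply hne
            have : ij.2 = m := by omega
            have : ij.1 = 0 := by omega
            exact Prod.ext ‹ij.1 = 0› ‹ij.2 = m›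
        rw [PowerSeries.coeff_derivative, PowerSeries.coeff_derivative, ih (ij.2 + 1) (by omega),
          sub_self, mul_zero]
      rw [hsingle] at hsum
      rcases mul_eq_zero.mp hsum with h | h
      · exact absurd h (by simpa [PowerSeries.coeff_zero_eq_constantCoeff] using hU)
      · rw [PowerSeries.coeff_derivative, PowerSeries.coeff_derivative, ← sub_mul] at h
        rcases mul_eq_zero.mp h with h' | h'
        · exact sub_eq_zero.mp h'
        · exact absurd h' (Nat.cast_add_one_ne_zero m)

lemma rescale_formalExp (c : ℂ) (H : PowerSeries ℂ) :
    rescale c (formalExp H) = formalExp (rescale c H) := by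
  ext n
  rw [PowerSeries.coeff_rescale, formalExp, formalExp, coeff_mk, coeff_mk, Finset.mul_sum]
  refine Finset.sum_congr rfl fun k _ => ?_
  rw [← map_pow, PowerSeries.coeff_rescale]
  ring

lemma rescale_formalLog (c : ℂ) (F : PowerSeries ℂ) :
    rescale c (formalLog F) = formalLog (rescale c F) := by
  ext n
  rw [PowerSeries.coeff_rescale, formalLog, formalLog, coeff_mk, coeff_mk, Finset.mul_sum]
  refine Finset.sum_congr rfl fun k _ => ?_
  rw [show rescale c F - 1 = rescale c (F - 1) by rw [map_sub, map_one], ← map_pow,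
    PowerSeries.coeff_rescale]
  ring

lemma rescale_smul (c a : ℂ) (f : PowerSeries ℂ) :
    rescale c (a • f) = a • rescale c f := by
  ext n
  rw [PowerSeries.coeff_rescale, PowerSeries.coeff_smul, PowerSeries.coeff_smul,
    PowerSeries.coeff_rescale, smul_eq_mul, smul_eq_mul]
  ring

lemma derivative_rescale (c : ℂ) (f : PowerSeries ℂ) :
    d⁄dX ℂ (rescale c f) = c • rescale c (d⁄dX ℂ f) := by
  ext n
  rw [PowerSeries.coeff_derivative, PowerSeries.coeff_rescale, PowerSeries.coeff_smul,
    PowerSeries.coeff_rescale, PowerSeries.coeff_derivative, smul_eq_mul, pow_succ]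
  ring

lemma derivative_exp : d⁄dX ℂ (PowerSeries.exp ℂ) = PowerSeries.exp ℂ := by
  ext n
  rw [PowerSeries.coeff_derivative, PowerSeries.coeff_exp, PowerSeries.coeff_exp]
  have h1 : ((n.factorial : ℂ)) ≠ 0 := Nat.cast_ne_zero.mpr n.factorial_ne_zero
  have h2 : ((n : ℂ) + 1) ≠ 0 := Nat.cast_add_one_ne_zero n
  rw [show (algebraMap ℚ ℂ) (1 / ((n + 1).factorial : ℚ)) = ((n + 1).factorial : ℂ)⁻¹ by
      push_cast [one_div]; simp,
    show (algebraMap ℚ ℂ) (1 / (n.factorial : ℚ)) = (n.factorial : ℂ)⁻¹ by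
      push_cast [one_div]; simp]
  rw [Nat.factorial_succ]
  push_cast
  field_simp


lemma constantCoeff_expSub1DivT : constantCoeff expSub1DivT = 1 := by
  rw [← PowerSeries.coeff_zero_eq_constantCoeff_apply, expSub1DivT, coeff_mk]
  simp

lemma bernoulliBase_mul : bernoulliBase * expSub1DivT = 1 :=
  PowerSeries.inv_mul_cancel _ (by rw [constantCoeff_expSub1DivT]; exact one_ne_zero)

lemma constantCoeff_bernoulliBase : constantCoeff bernoulliBase = 1 := by
  rw [bernoulliBase, PowerSeries.constantCoeff_inv, constantCoeff_expSub1DivT, inv_one]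

lemma coeff_exp_complex (n : ℕ) : coeff n (PowerSeries.exp ℂ) = (n.factorial : ℂ)⁻¹ := by
  rw [PowerSeries.coeff_exp]
  push_cast [one_div]
  simp

lemma X_mul_expSub1DivT : (PowerSeries.X : PowerSeries ℂ) * expSub1DivT = PowerSeries.exp ℂ - 1 := by
  ext n
  cases n with
  | zero =>
    simp [PowerSeries.coeff_zero_eq_constantCoeff, constantCoeff_expSub1DivT]
  | succ n =>
    rw [PowerSeries.coeff_succ_X_mul, map_sub, coeff_exp_complex, expSub1DivT, coeff_mk,
      PowerSeries.coeff_one, if_neg (Nat.succ_ne_zero n), sub_zero]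

lemma rescale_neg_one_exp_mul : rescale (-1 : ℂ) (PowerSeries.exp ℂ) * PowerSeries.exp ℂ = 1 := by
  have h := PowerSeries.exp_mul_exp_eq_exp_add (-1 : ℂ) 1
  rw [rescale_one] at h
  simpa [PowerSeries.rescale_zero, PowerSeries.constantCoeff_exp] using h

lemma rescale_neg_one_X : rescale (-1 : ℂ) (PowerSeries.X : PowerSeries ℂ) = -PowerSeries.X := by
  ext n
  rw [PowerSeries.coeff_rescale, map_neg, PowerSeries.coeff_X]
  rcases eq_or_ne n 1 with h | h
  · simp [h]
  · simp [h]

lemma rescale_neg_one_expSub1DivT :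
    rescale (-1 : ℂ) expSub1DivT * PowerSeries.exp ℂ = expSub1DivT := by
  have hX : (PowerSeries.X : PowerSeries ℂ) ≠ 0 := PowerSeries.X_ne_zero
  apply mul_left_cancel₀ hX
  have h2 := congrArg (rescale (-1 : ℂ)) X_mul_expSub1DivT
  rw [map_mul, rescale_neg_one_X, map_sub, map_one] at h2
  calc PowerSeries.X * (rescale (-1 : ℂ) expSub1DivT * PowerSeries.exp ℂ)
      = -((-PowerSeries.X) * rescale (-1 : ℂ) expSub1DivT) * PowerSeries.exp ℂ := by ring
    _ = -(rescale (-1 : ℂ) (PowerSeries.exp ℂ) - 1) * PowerSeries.exp ℂ := by rw [h2]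
    _ = PowerSeries.exp ℂ - rescale (-1 : ℂ) (PowerSeries.exp ℂ) * PowerSeries.exp ℂ := by ring
    _ = PowerSeries.exp ℂ - 1 := by rw [rescale_neg_one_exp_mul]
    _ = PowerSeries.X * expSub1DivT := X_mul_expSub1DivT.symm

lemma rescale_neg_one_bernoulliBase :
    rescale (-1 : ℂ) bernoulliBase = bernoulliBase * PowerSeries.exp ℂ := by
  have h1 : rescale (-1 : ℂ) bernoulliBase * rescale (-1 : ℂ) expSub1DivT = 1 := by
    rw [← map_mul, bernoulliBase_mul, map_one]
  have h2 : (bernoulliBase * PowerSeries.exp ℂ) * rescale (-1 : ℂ) expSub1DivT = 1 := by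
    calc (bernoulliBase * PowerSeries.exp ℂ) * rescale (-1 : ℂ) expSub1DivT
        = bernoulliBase * (rescale (-1 : ℂ) expSub1DivT * PowerSeries.exp ℂ) := by ring
      _ = bernoulliBase * expSub1DivT := by rw [rescale_neg_one_expSub1DivT]
      _ = 1 := bernoulliBase_mul
  calc rescale (-1 : ℂ) bernoulliBase
      = rescale (-1 : ℂ) bernoulliBase * ((bernoulliBase * PowerSeries.exp ℂ) *
          rescale (-1 : ℂ) expSub1DivT) := by rw [h2, mul_one]
    _ = (rescale (-1 : ℂ) bernoulliBase * rescale (-1 : ℂ) expSub1DivT) *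
          (bernoulliBase * PowerSeries.exp ℂ) := by ring
    _ = bernoulliBase * PowerSeries.exp ℂ := by rw [h1, one_mul]


lemma bernoulliBasePow_ODE (α : ℂ) :
    bernoulliBase * d⁄dX ℂ (bernoulliBasePow α) =
      PowerSeries.C α * (d⁄dX ℂ bernoulliBase * bernoulliBasePow α) := by
  have hL0 : constantCoeff (α • formalLog bernoulliBase) = 0 := by
    rw [PowerSeries.smul_eq_C_mul, map_mul, constantCoeff_formalLog, mul_zero]
  have hDL := mul_derivative_formalLog constantCoeff_bernoulliBase
  rw [bernoulliBasePow, derivative_formalExp hL0, Derivation.map_smul,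
    PowerSeries.smul_eq_C_mul]
  calc bernoulliBase * (PowerSeries.C α * d⁄dX ℂ (formalLog bernoulliBase) *
        formalExp (α • formalLog bernoulliBase))
      = PowerSeries.C α * ((bernoulliBase * d⁄dX ℂ (formalLog bernoulliBase)) *
        formalExp (α • formalLog bernoulliBase)) := by ring
    _ = PowerSeries.C α * (d⁄dX ℂ bernoulliBase *
        formalExp (α • formalLog bernoulliBase)) := by rw [hDL]

lemma constantCoeff_bernoulliBasePow (α : ℂ) :
    constantCoeff (bernoulliBasePow α) = 1 := by
  rw [bernoulliBasePow, constantCoeff_formalExp]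

lemma reflect_series (α : ℂ) :
    rescale (-1 : ℂ) (bernoulliBasePow α) =
      bernoulliBasePow α * rescale α (PowerSeries.exp ℂ) := by
  have hrD : ∀ f : PowerSeries ℂ, rescale (-1 : ℂ) (d⁄dX ℂ f) = -(d⁄dX ℂ (rescale (-1 : ℂ) f)) := by
    intro f
    rw [derivative_rescale]
    rw [neg_smul, one_smul, neg_neg]
  have hode := bernoulliBasePow_ODE α
  set F := bernoulliBasePow α with hF
  set B := bernoulliBase with hB
  set E := PowerSeries.exp ℂ with hE
  have hrC : ∀ a : ℂ, rescale (-1 : ℂ) (PowerSeries.C a) = PowerSeries.C a := by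
    intro a
    ext n
    rw [PowerSeries.coeff_rescale, PowerSeries.coeff_C]
    rcases eq_or_ne n 0 with h | h
    · simp [h]
    · simp [h]
  -- ODE for G1 = rescale (-1) F
  have h1 : (B * E) * d⁄dX ℂ (rescale (-1 : ℂ) F) =
      (PowerSeries.C α * d⁄dX ℂ (B * E)) * rescale (-1 : ℂ) F := by
    have h := congrArg (rescale (-1 : ℂ)) hode
    rw [map_mul, map_mul, map_mul, hrD, hrD, rescale_neg_one_bernoulliBase, hrC] at h
    linear_combination -h
  -- ODE for G2 = F * rescale α E
  have hDEa : d⁄dX ℂ (rescale α E) = PowerSeries.C α * rescale α E := by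
    rw [hE, derivative_rescale, _root_.derivative_exp, PowerSeries.smul_eq_C_mul]
  have h2 : (B * E) * d⁄dX ℂ (F * rescale α E) =
      (PowerSeries.C α * d⁄dX ℂ (B * E)) * (F * rescale α E) := by
    rw [Derivation.leibniz (d⁄dX ℂ) F (rescale α E), Derivation.leibniz (d⁄dX ℂ) B E]
    simp only [smul_eq_mul]
    rw [hDEa, hE, _root_.derivative_exp]
    linear_combination (PowerSeries.exp ℂ * rescale α (PowerSeries.exp ℂ)) * hode
  have hc : ∀ (c : ℂ) (f : PowerSeries ℂ),
      constantCoeff (rescale c f) = constantCoeff f := by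
    intro c f
    rw [← PowerSeries.coeff_zero_eq_constantCoeff_apply, PowerSeries.coeff_rescale]
    simp
  have h0 : constantCoeff (rescale (-1 : ℂ) F) = constantCoeff (F * rescale α E) := by
    rw [map_mul, hc, hc, hE, PowerSeries.constantCoeff_exp, mul_one]
  have hU : constantCoeff (B * E) ≠ 0 := by
    rw [map_mul, hB, constantCoeff_bernoulliBase, hE, PowerSeries.constantCoeff_exp, one_mul]
    exact one_ne_zero
  exact ode_unique hU h1 h2 h0



lemma genBernoulli_reflect (α : ℂ) (m : ℕ) :
    ∑ k ∈ Finset.range (m + 1), (m.choose k : ℂ) * α ^ (m - k) * genBernoulliNumber α k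
      = (-1 : ℂ) ^ m * genBernoulliNumber α m := by
  have h := congrArg (PowerSeries.coeff m) (reflect_series α)
  rw [PowerSeries.coeff_rescale, PowerSeries.coeff_mul,
    Finset.Nat.sum_antidiagonal_eq_sum_range_succ_mk] at h
  simp only [PowerSeries.coeff_rescale, coeff_exp_complex] at h
  rw [show (-1 : ℂ) ^ m * genBernoulliNumber α m
      = (m.factorial : ℂ) * ((-1 : ℂ) ^ m * coeff m (bernoulliBasePow α)) by
        unfold genBernoulliNumber; ring,
    h, Finset.mul_sum]
  refine Finset.sum_congr rfl fun k hk => ?_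
  have hk' : k ≤ m := by
    have := Finset.mem_range.mp hk; omega
  have hfac : (((m - k).factorial : ℂ)) ≠ 0 := Nat.cast_ne_zero.mpr (Nat.factorial_ne_zero _)
  have hcf : ((m.choose k : ℕ) : ℂ) * (k.factorial : ℂ) * (((m - k).factorial : ℂ))
      = (m.factorial : ℂ) := by
    exact_mod_cast congrArg (Nat.cast : ℕ → ℂ) (Nat.choose_mul_factorial_mul_factorial hk')
  unfold genBernoulliNumber
  field_simp
  linear_combination (α ^ (m - k) * coeff k (bernoulliBasePow α)) * hcf


lemma alt_sum_choose_choose (ℓ b : ℕ) :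
    ∑ k ∈ Finset.range (ℓ + 1), (-1 : ℂ) ^ k * (ℓ.choose k : ℂ) * (k.choose b : ℂ)
      = if b = ℓ then (-1 : ℂ) ^ ℓ else 0 := by
  rcases le_or_gt b ℓ with hb | hb
  · have step1 : ∑ k ∈ Finset.range (ℓ + 1), (-1 : ℂ) ^ k * (ℓ.choose k : ℂ) * (k.choose b : ℂ)
        = ∑ k ∈ Finset.Ico b (ℓ + 1), (-1 : ℂ) ^ k * (ℓ.choose k : ℂ) * (k.choose b : ℂ) := by
      refine (Finset.sum_subset ?_ ?_).symm
      · intro x hx; exact Finset.mem_range.mpr (Finset.mem_Ico.mp hx).2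
      · intro x hx hxn
        have hxb : x < b := by
          have h1 := Finset.mem_range.mp hx
          by_contra hge
          exact hxn (Finset.mem_Ico.mpr ⟨by omega, h1⟩)
        rw [Nat.choose_eq_zero_of_lt hxb]
        push_cast; ring
    rw [step1, Finset.sum_Ico_eq_sum_range, show ℓ + 1 - b = (ℓ - b) + 1 by omega]
    have step2 : ∀ i ∈ Finset.range ((ℓ - b) + 1),
        (-1 : ℂ) ^ (b + i) * (ℓ.choose (b + i) : ℂ) * ((b + i).choose b : ℂ)
        = ((-1 : ℂ) ^ b * (ℓ.choose b : ℂ)) * ((-1 : ℂ) ^ i * ((ℓ - b).choose i : ℂ)) := by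
      intro i hi
      have hi' : i ≤ ℓ - b := by have := Finset.mem_range.mp hi; omega
      have h1 : b + i ≤ ℓ := by omega
      have h2 : b ≤ b + i := by omega
      have hcm := Nat.choose_mul (n := ℓ) h2
      rw [show b + i - b = i by omega] at hcm
      have hc : ((ℓ.choose (b + i) : ℕ) : ℂ) * (((b + i).choose b : ℕ) : ℂ)
          = ((ℓ.choose b : ℕ) : ℂ) * (((ℓ - b).choose i : ℕ) : ℂ) := by
        exact_mod_cast congrArg (Nat.cast : ℕ → ℂ) hcm
      rw [pow_add]
      linear_combination ((-1 : ℂ) ^ b * (-1 : ℂ) ^ i) * hc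
    rw [Finset.sum_congr rfl step2, ← Finset.mul_sum]
    have halt : ∑ i ∈ Finset.range ((ℓ - b) + 1), (-1 : ℂ) ^ i * ((ℓ - b).choose i : ℂ)
        = if ℓ - b = 0 then 1 else 0 := by
      have h0 := Int.alternating_sum_range_choose (n := ℓ - b)
      have h1 := congrArg (fun z : ℤ => (z : ℂ)) h0
      push_cast at h1
      simpa using h1
    rw [halt]
    rcases eq_or_ne b ℓ with h | h
    · subst h; simp
    · rw [if_neg (by omega : ¬ ℓ - b = 0), if_neg h, mul_zero]
  · rw [if_neg (by omega : ¬ b = ℓ)]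
    refine Finset.sum_eq_zero fun k hk => ?_
    have hkb : k < b := by have := Finset.mem_range.mp hk; omega
    rw [Nat.choose_eq_zero_of_lt hkb]
    push_cast; ring

lemma key_comb (n ℓ j : ℕ) :
    ∑ k ∈ Finset.range (ℓ + 1), (-1 : ℂ) ^ (ℓ + k) * (ℓ.choose k : ℂ) * ((n + k).choose j : ℂ)
      = if ℓ ≤ j then ((n.choose (j - ℓ) : ℕ) : ℂ) else 0 := by
  have expand : ∀ k : ℕ, ((n + k).choose j : ℂ)
      = ∑ ab ∈ Finset.HasAntidiagonal.antidiagonal j, (n.choose ab.1 : ℂ) * (k.choose ab.2 : ℂ) := by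
    intro k
    have h := congrArg (Nat.cast : ℕ → ℂ) (Nat.add_choose_eq n k j)
    push_cast at h
    exact h
  have main : ∑ k ∈ Finset.range (ℓ + 1), (-1 : ℂ) ^ (ℓ + k) * (ℓ.choose k : ℂ)
        * ((n + k).choose j : ℂ)
      = ∑ ab ∈ Finset.HasAntidiagonal.antidiagonal j, (-1 : ℂ) ^ ℓ * (n.choose ab.1 : ℂ) *
          (if ab.2 = ℓ then (-1 : ℂ) ^ ℓ else 0) := by
    calc ∑ k ∈ Finset.range (ℓ + 1), (-1 : ℂ) ^ (ℓ + k) * (ℓ.choose k : ℂ)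
          * ((n + k).choose j : ℂ)
        = ∑ k ∈ Finset.range (ℓ + 1), ∑ ab ∈ Finset.HasAntidiagonal.antidiagonal j,
            (-1 : ℂ) ^ ℓ * (n.choose ab.1 : ℂ) *
              ((-1 : ℂ) ^ k * (ℓ.choose k : ℂ) * (k.choose ab.2 : ℂ)) := by
          refine Finset.sum_congr rfl fun k _ => ?_
          rw [expand k, Finset.mul_sum]
          refine Finset.sum_congr rfl fun ab _ => ?_
          rw [pow_add]; ring
      _ = ∑ ab ∈ Finset.HasAntidiagonal.antidiagonal j, ∑ k ∈ Finset.range (ℓ + 1),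
            (-1 : ℂ) ^ ℓ * (n.choose ab.1 : ℂ) *
              ((-1 : ℂ) ^ k * (ℓ.choose k : ℂ) * (k.choose ab.2 : ℂ)) := Finset.sum_comm
      _ = ∑ ab ∈ Finset.HasAntidiagonal.antidiagonal j, (-1 : ℂ) ^ ℓ * (n.choose ab.1 : ℂ) *
            (if ab.2 = ℓ then (-1 : ℂ) ^ ℓ else 0) := by
          refine Finset.sum_congr rfl fun ab _ => ?_
          rw [← Finset.mul_sum, alt_sum_choose_choose]
  rw [main]
  have hsq : (-1 : ℂ) ^ ℓ * (-1 : ℂ) ^ ℓ = 1 := by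
    rw [← pow_add, ← two_mul, pow_mul]
    norm_num
  rcases le_or_gt ℓ j with h | h
  · rw [if_pos h]
    rw [Finset.sum_eq_single_of_mem ((j - ℓ, ℓ)) (Finset.HasAntidiagonal.mem_antidiagonal.mpr (by omega)) ?_]
    · rw [if_pos rfl]
      calc (-1 : ℂ) ^ ℓ * ((n.choose (j - ℓ) : ℕ) : ℂ) * (-1 : ℂ) ^ ℓ
          = ((-1 : ℂ) ^ ℓ * (-1 : ℂ) ^ ℓ) * ((n.choose (j - ℓ) : ℕ) : ℂ) := by ring
        _ = ((n.choose (j - ℓ) : ℕ) : ℂ) := by rw [hsq, one_mul]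
    · intro ab hab hne
      have hmem := Finset.HasAntidiagonal.mem_antidiagonal.mp hab
      have hne2 : ab.2 ≠ ℓ := by
        intro he
        apply hne
        have h1 : ab.1 = j - ℓ := by omega
        exact Prod.ext h1 he
      rw [if_neg hne2, mul_zero]
  · rw [if_neg (by omega : ¬ ℓ ≤ j)]
    refine Finset.sum_eq_zero fun ab hab => ?_
    have hmem := Finset.HasAntidiagonal.mem_antidiagonal.mp hab
    have hne2 : ab.2 ≠ ℓ := by omega
    rw [if_neg hne2, mul_zero]

end Aux

/-- (Corrected Neto identity.) For `α ∈ ℂ` and `ℓ, n ∈ ℕ`: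
`∑_{k=0}^{n} α^{n-k} C(n,k) B_{ℓ+k}^{(α)}
 + (-1)^{ℓ+n+1} ∑_{k=0}^{ℓ} α^{ℓ-k} C(ℓ,k) B_{n+k}^{(α)} = 0`. -/
theorem neto_identity (α : ℂ) (ℓ n : ℕ) :
    (∑ k ∈ Finset.range (n + 1),
        α ^ (n - k) * (n.choose k : ℂ) * genBernoulliNumber α (ℓ + k)) +
      (-1 : ℂ) ^ (ℓ + n + 1) *
        ∑ k ∈ Finset.range (ℓ + 1),
          α ^ (ℓ - k) * (ℓ.choose k : ℂ) * genBernoulliNumber α (n + k) = 0 := by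
  have hsq : ∀ m : ℕ, (-1 : ℂ) ^ m * (-1 : ℂ) ^ m = 1 := fun m => by
    rw [← pow_add, ← two_mul, pow_mul]; norm_num
  have stepk : ∀ k ∈ Finset.range (ℓ + 1),
      (-1 : ℂ) ^ (ℓ + n) * (α ^ (ℓ - k) * (ℓ.choose k : ℂ) * genBernoulliNumber α (n + k))
      = ∑ j ∈ Finset.range (n + ℓ + 1),
          (-1 : ℂ) ^ (ℓ + k) * (ℓ.choose k : ℂ) * ((n + k).choose j : ℂ) *
            (α ^ (n + ℓ - j) * genBernoulliNumber α j) := by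
    intro k hk
    have hkl : k ≤ ℓ := by have := Finset.mem_range.mp hk; omega
    have hrefl := genBernoulli_reflect α (n + k)
    have hT : genBernoulliNumber α (n + k)
        = (-1 : ℂ) ^ (n + k) * ∑ j ∈ Finset.range (n + k + 1),
            ((n + k).choose j : ℂ) * α ^ (n + k - j) * genBernoulliNumber α j := by
      rw [hrefl, ← mul_assoc, hsq (n + k), one_mul]
    rw [hT]
    simp only [Finset.mul_sum]
    rw [← Finset.sum_subset (Finset.range_subset_range.mpr (by omega : n + k + 1 ≤ n + ℓ + 1))
        (fun j _ hj => by
          simp only [Finset.mem_range, not_lt] at hj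
          rw [Nat.choose_eq_zero_of_lt (show n + k < j by omega)]
          push_cast; ring)]
    refine Finset.sum_congr rfl fun j hj => ?_
    have hjk : j ≤ n + k := by have := Finset.mem_range.mp hj; omega
    have ha : α ^ (n + ℓ - j) = α ^ (ℓ - k) * α ^ (n + k - j) := by
      rw [show n + ℓ - j = (ℓ - k) + (n + k - j) by omega, pow_add]
    have h2 : (-1 : ℂ) ^ (ℓ + n + (n + k)) = (-1 : ℂ) ^ (ℓ + k) := by
      rw [show ℓ + n + (n + k) = 2 * n + (ℓ + k) by omega, pow_add, pow_mul]
      norm_num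
    have hs : (-1 : ℂ) ^ (ℓ + k) = (-1 : ℂ) ^ (ℓ + n) * (-1 : ℂ) ^ (n + k) := by
      rw [← pow_add, h2]
    rw [ha, hs]
    ring
  have claim : (-1 : ℂ) ^ (ℓ + n) *
      ∑ k ∈ Finset.range (ℓ + 1),
        α ^ (ℓ - k) * (ℓ.choose k : ℂ) * genBernoulliNumber α (n + k)
      = ∑ k ∈ Finset.range (n + 1),
        α ^ (n - k) * (n.choose k : ℂ) * genBernoulliNumber α (ℓ + k) := by
    calc (-1 : ℂ) ^ (ℓ + n) *
        ∑ k ∈ Finset.range (ℓ + 1),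
          α ^ (ℓ - k) * (ℓ.choose k : ℂ) * genBernoulliNumber α (n + k)
        = ∑ k ∈ Finset.range (ℓ + 1), (-1 : ℂ) ^ (ℓ + n) *
            (α ^ (ℓ - k) * (ℓ.choose k : ℂ) * genBernoulliNumber α (n + k)) :=
          Finset.mul_sum _ _ _
      _ = ∑ k ∈ Finset.range (ℓ + 1), ∑ j ∈ Finset.range (n + ℓ + 1),
            (-1 : ℂ) ^ (ℓ + k) * (ℓ.choose k : ℂ) * ((n + k).choose j : ℂ) *
              (α ^ (n + ℓ - j) * genBernoulliNumber α j) := Finset.sum_congr rfl stepk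
      _ = ∑ j ∈ Finset.range (n + ℓ + 1), ∑ k ∈ Finset.range (ℓ + 1),
            (-1 : ℂ) ^ (ℓ + k) * (ℓ.choose k : ℂ) * ((n + k).choose j : ℂ) *
              (α ^ (n + ℓ - j) * genBernoulliNumber α j) := Finset.sum_comm
      _ = ∑ j ∈ Finset.range (n + ℓ + 1),
            (if ℓ ≤ j then ((n.choose (j - ℓ) : ℕ) : ℂ) else 0) *
              (α ^ (n + ℓ - j) * genBernoulliNumber α j) := by
          refine Finset.sum_congr rfl fun j _ => ?_
          rw [← Finset.sum_mul, key_comb]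
      _ = ∑ j ∈ Finset.Ico ℓ (n + ℓ + 1),
            (if ℓ ≤ j then ((n.choose (j - ℓ) : ℕ) : ℂ) else 0) *
              (α ^ (n + ℓ - j) * genBernoulliNumber α j) := by
          refine (Finset.sum_subset ?_ ?_).symm
          · intro x hx; exact Finset.mem_range.mpr (Finset.mem_Ico.mp hx).2
          · intro x hx hxn
            have hxl : x < ℓ := by
              have h1 := Finset.mem_range.mp hx
              by_contra hge
              exact hxn (Finset.mem_Ico.mpr ⟨by omega, h1⟩)
            rw [if_neg (by omega), zero_mul]
      _ = ∑ k ∈ Finset.range (n + 1),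
            α ^ (n - k) * (n.choose k : ℂ) * genBernoulliNumber α (ℓ + k) := by
          rw [Finset.sum_Ico_eq_sum_range, show n + ℓ + 1 - ℓ = n + 1 by omega]
          refine Finset.sum_congr rfl fun i hi => ?_
          rw [if_pos (by omega : ℓ ≤ ℓ + i), show ℓ + i - ℓ = i by omega,
            show n + ℓ - (ℓ + i) = n - i by omega]
          ring
  rw [← claim, pow_succ]
  ring
end

section
/- Let ℓ, n, r be natural numbers. Then Σ_{k=0}^{n+r} C(n+r,k) C(ℓ+k+r,r) B_{ℓ+k} + (−1)^{ℓ+n+r+1} Σ_{k=0}^{ℓ+r} C(ℓ+r,k) C(n+k+r,r) B_{n+k} = 0. -/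
open scoped BigOperators
open Finset

section UmbralSection
open Polynomial

/-- The umbral linear functional sending `X^n` to `_root_.bernoulli n`. -/
noncomputable def Lb : Polynomial ℚ →ₗ[ℚ] ℚ :=
  Polynomial.lsum (fun n => LinearMap.toSpanSingleton ℚ ℚ (_root_.bernoulli n))

lemma Lb_monomial (n : ℕ) (c : ℚ) : Lb (Polynomial.monomial n c) = c * _root_.bernoulli n := by
  simp [Lb, Polynomial.lsum_apply, Polynomial.sum_monomial_index,
    LinearMap.toSpanSingleton_apply, smul_eq_mul]

lemma Lb_X_pow (n : ℕ) : Lb ((X : ℚ[X]) ^ n) = _root_.bernoulli n := by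
  rw [Polynomial.X_pow_eq_monomial, Lb_monomial, one_mul]

lemma Lb_C_mul (a : ℚ) (p : ℚ[X]) : Lb (Polynomial.C a * p) = a * Lb p := by
  rw [← Polynomial.smul_eq_C_mul, map_smul, smul_eq_mul]

lemma sum_choose_bern (m : ℕ) :
    ∑ i ∈ range (m + 1), (m.choose i : ℚ) * _root_.bernoulli i = (-1) ^ m * _root_.bernoulli m := by
  rw [Finset.sum_range_succ, _root_.sum_bernoulli, Nat.choose_self]
  rcases eq_or_ne m 1 with rfl | hm
  · norm_num
  · rw [if_neg hm, zero_add, Nat.cast_one, one_mul]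
    rcases Nat.even_or_odd m with he | ho
    · rw [he.neg_one_pow, one_mul]
    · rcases Nat.lt_or_ge m 2 with h2 | h2
      · interval_cases m <;> simp_all
      · rw [bernoulli_eq_bernoulli'_of_ne_one hm,
          bernoulli'_eq_zero_of_odd ho (by omega), mul_zero]

lemma Lb_X_add_one_pow (m : ℕ) : Lb (((X : ℚ[X]) + 1) ^ m) = (-1) ^ m * _root_.bernoulli m := by
  have h : ((X : ℚ[X]) + 1) ^ m
      = ∑ i ∈ range (m + 1), Polynomial.C ((m.choose i : ℚ)) * X ^ i := by
    rw [add_pow (X : ℚ[X]) 1 m]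
    refine Finset.sum_congr rfl fun i _ => ?_
    rw [one_pow, mul_one, mul_comm, ← Polynomial.C_eq_natCast]
  rw [h, map_sum, ← sum_choose_bern m]
  refine Finset.sum_congr rfl fun i _ => ?_
  rw [Lb_C_mul, Lb_X_pow]

lemma Lb_comp_reflect (p : ℚ[X]) : Lb (p.comp (X + 1)) = Lb (p.comp (-X)) := by
  induction p using Polynomial.induction_on' with
  | add p q hp hq => rw [Polynomial.add_comp, Polynomial.add_comp, map_add, map_add, hp, hq]
  | monomial n a =>
      rw [Polynomial.monomial_comp, Polynomial.monomial_comp, Lb_C_mul, Lb_C_mul]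
      congr 1
      have e : ((-X : ℚ[X]) ^ n) = Polynomial.C ((-1 : ℚ) ^ n) * X ^ n := by
        rw [neg_pow, map_pow, map_neg, map_one]
      rw [Lb_X_add_one_pow, e, Lb_C_mul, Lb_X_pow]

/-- `G a b = L(X^a (X+1)^b) = ∑_k C(b,k) B_{a+k}`. -/
noncomputable def G (a b : ℕ) : ℚ :=
  ∑ k ∈ range (b + 1), (b.choose k : ℚ) * _root_.bernoulli (a + k)

lemma Lb_G (a b : ℕ) : Lb ((X : ℚ[X]) ^ a * (X + 1) ^ b) = G a b := by
  have h : (X : ℚ[X]) ^ a * (X + 1) ^ b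
      = ∑ k ∈ range (b + 1), Polynomial.C ((b.choose k : ℚ)) * X ^ (a + k) := by
    rw [add_pow (X : ℚ[X]) 1 b, Finset.mul_sum]
    refine Finset.sum_congr rfl fun k _ => ?_
    rw [one_pow, mul_one, pow_add, ← Polynomial.C_eq_natCast]
    ring
  rw [h, map_sum, G]
  refine Finset.sum_congr rfl fun k _ => ?_
  rw [Lb_C_mul, Lb_X_pow]

lemma G_symm (a b : ℕ) : G a b = (-1) ^ (a + b) * G b a := by
  have h1 : (((X : ℚ[X]) - 1) ^ a * X ^ b).comp (X + 1) = X ^ a * (X + 1) ^ b := by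
    rw [Polynomial.mul_comp, Polynomial.pow_comp, Polynomial.pow_comp,
      Polynomial.sub_comp, Polynomial.X_comp, Polynomial.one_comp]
    ring_nf
  have h2 : (((X : ℚ[X]) - 1) ^ a * X ^ b).comp (-X)
      = Polynomial.C ((-1 : ℚ) ^ (a + b)) * (X ^ b * (X + 1) ^ a) := by
    rw [Polynomial.mul_comp, Polynomial.pow_comp, Polynomial.pow_comp,
      Polynomial.sub_comp, Polynomial.X_comp, Polynomial.one_comp]
    have e1 : (-(X : ℚ[X]) - 1) ^ a = (-1) ^ a * (X + 1) ^ a := by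
      rw [← neg_pow]; ring_nf
    have e2 : (-(X : ℚ[X])) ^ b = (-1) ^ b * X ^ b := by
      rw [← neg_pow]
    rw [e1, e2]
    have : ((-1 : ℚ[X]) ^ (a + b)) = Polynomial.C ((-1 : ℚ) ^ (a + b)) := by
      rw [map_pow, map_neg, map_one]
    rw [← this, pow_add]
    ring
  have := Lb_comp_reflect (((X : ℚ[X]) - 1) ^ a * X ^ b)
  rw [h1, h2, Lb_C_mul, Lb_G, Lb_G] at this
  exact this

/-- The key coefficient identity, obtained by computing the coefficient of `Y^r` in
`(Y + x)^N (Y + x + 1)^M` (with `x = X`) in two ways and applying `Lb`. -/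
lemma key (N M r : ℕ) :
    ∑ k ∈ range (M + 1), (M.choose k : ℚ) * ((N + k).choose r : ℚ) * _root_.bernoulli (N + k - r)
      = ∑ ij ∈ Finset.HasAntidiagonal.antidiagonal r,
          (N.choose ij.1 : ℚ) * (M.choose ij.2 : ℚ) * G (N - ij.1) (M - ij.2) := by
  set x : ℚ[X] := X with hx
  set Q : Polynomial ℚ[X] := (X + Polynomial.C x) ^ N * (X + Polynomial.C (x + 1)) ^ M with hQ
  have way1 : Q.coeff r
      = ∑ k ∈ range (M + 1),
          Polynomial.C ((M.choose k : ℚ)) * (Polynomial.C (((N + k).choose r : ℚ))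
            * x ^ (N + k - r)) := by
    have expand : Q = ∑ k ∈ range (M + 1),
        (X + Polynomial.C x) ^ (N + k) * ((M.choose k : Polynomial ℚ[X])) := by
      rw [hQ]
      have : (X + Polynomial.C (x + 1) : Polynomial ℚ[X]) = (X + Polynomial.C x) + 1 := by
        rw [map_add, map_one]; ring
      rw [this, add_pow (X + Polynomial.C x : Polynomial ℚ[X]) 1 M, Finset.mul_sum]
      refine Finset.sum_congr rfl fun k _ => ?_
      rw [one_pow, mul_one, pow_add]
      ring
    rw [expand, Polynomial.finset_sum_coeff]
    refine Finset.sum_congr rfl fun k _ => ?_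
    rw [← Polynomial.C_eq_natCast, Polynomial.coeff_mul_C, Polynomial.coeff_X_add_C_pow]
    rw [show ((N + k).choose r : ℚ[X]) = Polynomial.C (((N + k).choose r : ℚ)) by
      rw [Polynomial.C_eq_natCast],
      show ((M.choose k : ℕ) : ℚ[X]) = Polynomial.C ((M.choose k : ℚ)) by
      rw [Polynomial.C_eq_natCast]]
    ring
  have way2 : Q.coeff r
      = ∑ ij ∈ Finset.HasAntidiagonal.antidiagonal r,
          Polynomial.C ((N.choose ij.1 : ℚ)) * Polynomial.C ((M.choose ij.2 : ℚ))
            * (x ^ (N - ij.1) * (x + 1) ^ (M - ij.2)) := by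
    rw [hQ, Polynomial.coeff_mul]
    refine Finset.sum_congr rfl fun ij _ => ?_
    rw [Polynomial.coeff_X_add_C_pow, Polynomial.coeff_X_add_C_pow]
    rw [show ((N.choose ij.1 : ℕ) : ℚ[X]) = Polynomial.C ((N.choose ij.1 : ℚ)) by
      rw [Polynomial.C_eq_natCast],
      show ((M.choose ij.2 : ℕ) : ℚ[X]) = Polynomial.C ((M.choose ij.2 : ℚ)) by
      rw [Polynomial.C_eq_natCast]]
    ring
  have := congrArg Lb (way1.symm.trans way2)
  rw [map_sum, map_sum] at this
  calc ∑ k ∈ range (M + 1), (M.choose k : ℚ) * ((N + k).choose r : ℚ) * _root_.bernoulli (N + k - r)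
      = ∑ k ∈ range (M + 1), Lb (Polynomial.C ((M.choose k : ℚ))
          * (Polynomial.C (((N + k).choose r : ℚ)) * x ^ (N + k - r))) := by
        refine Finset.sum_congr rfl fun k _ => ?_
        rw [Lb_C_mul, Lb_C_mul, hx, Lb_X_pow]; ring
    _ = ∑ ij ∈ Finset.HasAntidiagonal.antidiagonal r, Lb (Polynomial.C ((N.choose ij.1 : ℚ))
          * Polynomial.C ((M.choose ij.2 : ℚ)) * (x ^ (N - ij.1) * (x + 1) ^ (M - ij.2))) := this
    _ = ∑ ij ∈ Finset.HasAntidiagonal.antidiagonal r,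
          (N.choose ij.1 : ℚ) * (M.choose ij.2 : ℚ) * G (N - ij.1) (M - ij.2) := by
        refine Finset.sum_congr rfl fun ij _ => ?_
        rw [mul_assoc, Lb_C_mul, Lb_C_mul, hx, Lb_G]; ring

/-- The one-sided sum in Agoh's identity. -/
noncomputable def T (ℓ n r : ℕ) : ℚ :=
  ∑ k ∈ Finset.range (n + r + 1),
    ((n + r).choose k : ℚ) * ((ℓ + k + r).choose r : ℚ) * _root_.bernoulli (ℓ + k)

lemma T_eq (ℓ n r : ℕ) :
    T ℓ n r = ∑ ij ∈ Finset.HasAntidiagonal.antidiagonal r,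
      ((ℓ + r).choose ij.1 : ℚ) * ((n + r).choose ij.2 : ℚ)
        * G (ℓ + r - ij.1) (n + r - ij.2) := by
  rw [← key (ℓ + r) (n + r) r, T]
  refine Finset.sum_congr rfl fun k _ => ?_
  rw [show ℓ + r + k - r = ℓ + k by omega, show ℓ + k + r = ℓ + r + k by ring]

lemma T_symm (ℓ n r : ℕ) : T ℓ n r = (-1) ^ (ℓ + n + r) * T n ℓ r := by
  rw [T_eq, T_eq, Finset.mul_sum]
  conv_rhs => rw [← Finset.HasAntidiagonal.map_swap_antidiagonal (n := r), Finset.sum_map]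
  refine Finset.sum_congr rfl fun ij hij => ?_
  have hsum : ij.1 + ij.2 = r := Finset.HasAntidiagonal.mem_antidiagonal.mp hij
  simp only [Function.Embedding.coeFn_mk, Prod.fst_swap, Prod.snd_swap]
  rw [G_symm (ℓ + r - ij.1) (n + r - ij.2),
    show ℓ + r - ij.1 + (n + r - ij.2) = ℓ + n + r by omega]
  ring

end UmbralSection

/-- Agoh's identity: `S_{n,ℓ,r}^{(1)}(1,0,0) = 0`, i.e.
`∑_{k=0}^{n+r} C(n+r,k) C(ℓ+k+r,r) B_{ℓ+k}
 + (-1)^{ℓ+n+r+1} ∑_{k=0}^{ℓ+r} C(ℓ+r,k) C(n+k+r,r) B_{n+k} = 0`. -/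
theorem agoh_identity (ℓ n r : ℕ) :
    (∑ k ∈ Finset.range (n + r + 1),
        ((n + r).choose k : ℚ) * ((ℓ + k + r).choose r : ℚ) * bernoulli (ℓ + k)) +
      (-1 : ℚ) ^ (ℓ + n + r + 1) *
        ∑ k ∈ Finset.range (ℓ + r + 1),
          ((ℓ + r).choose k : ℚ) * ((n + k + r).choose r : ℚ) * bernoulli (n + k) = 0 := by
  have h1 : (∑ k ∈ Finset.range (n + r + 1),
      ((n + r).choose k : ℚ) * ((ℓ + k + r).choose r : ℚ) * bernoulli (ℓ + k)) = T ℓ n r := rfl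
  have h2 : (∑ k ∈ Finset.range (ℓ + r + 1),
      ((ℓ + r).choose k : ℚ) * ((n + k + r).choose r : ℚ) * bernoulli (n + k)) = T n ℓ r := rfl
  rw [h1, h2, T_symm ℓ n r, pow_succ]
  ring
end

section
/- For every natural number n ≥ 1, one has Σ_{k=0}^{n} C(n+1,k) (n+k+1) B_{n+k} = 0. -/
open scoped BigOperators
open Finset

/-- Auxiliary sum `A m n = ∑_{i=0}^{m} C(m,i) B_{n+i}`. -/
private def kanekoA (m n : ℕ) : ℚ :=
  ∑ i ∈ Finset.range (m + 1), (m.choose i : ℚ) * bernoulli (n + i)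

private lemma kanekoA_pascal (m n : ℕ) :
    kanekoA (m + 1) n = kanekoA m n + kanekoA m (n + 1) := by
  unfold kanekoA
  rw [Finset.sum_range_succ' (fun i => ((m+1).choose i : ℚ) * bernoulli (n + i)) (m+1)]
  have h1 : ∀ i, ((m+1).choose (i+1) : ℚ) = (m.choose i : ℚ) + (m.choose (i+1) : ℚ) := by
    intro i; exact_mod_cast congrArg (Nat.cast (R := ℚ)) (Nat.choose_succ_succ m i)
  have : ∑ i ∈ Finset.range (m + 1), ((m+1).choose (i+1) : ℚ) * bernoulli (n + (i+1))
      = (∑ i ∈ Finset.range (m + 1), (m.choose i : ℚ) * bernoulli (n + 1 + i))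
        + ∑ i ∈ Finset.range (m + 1), (m.choose (i+1) : ℚ) * bernoulli (n + (i+1)) := by
    rw [← Finset.sum_add_distrib]
    apply Finset.sum_congr rfl
    intro i _
    rw [h1 i, add_mul, show n + (i+1) = n + 1 + i from by omega]
  rw [this]
  have h2 : ∑ i ∈ Finset.range (m + 1), (m.choose (i+1) : ℚ) * bernoulli (n + (i+1))
      = ∑ i ∈ Finset.range m, (m.choose (i+1) : ℚ) * bernoulli (n + (i+1)) := by
    rw [Finset.sum_range_succ, Nat.choose_succ_self]
    simp
  rw [h2]
  rw [Finset.sum_range_succ' (fun i => (m.choose i : ℚ) * bernoulli (n + i)) m]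
  simp
  ring

private lemma kanekoA_zero_right (n : ℕ) :
    kanekoA n 0 = bernoulli n + (if n = 1 then 1 else 0) := by
  unfold kanekoA
  rw [Finset.sum_range_succ]
  simp only [Nat.choose_self, Nat.cast_one, one_mul, zero_add]
  rw [sum_bernoulli]
  ring

private lemma kanekoA_symm (m : ℕ) : ∀ n : ℕ,
    (-1 : ℚ) ^ m * kanekoA m n = (-1 : ℚ) ^ n * kanekoA n m := by
  induction m with
  | zero =>
    intro n
    have h0 : kanekoA 0 n = bernoulli n := by
      unfold kanekoA; simp
    rw [h0, kanekoA_zero_right]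
    rcases Nat.lt_or_ge n 2 with h | h
    · interval_cases n <;> norm_num
    · have hne : n ≠ 1 := by omega
      rcases Nat.even_or_odd n with he | ho
      · rw [he.neg_one_pow]; simp [hne]
      · have : bernoulli n = 0 := by
          rw [bernoulli_eq_bernoulli'_of_ne_one hne,
            bernoulli'_eq_zero_of_odd ho (by omega)]
        simp [this, hne]
  | succ m ih =>
    intro n
    have e1 := ih n
    have e2 := ih (n + 1)
    have e3 : kanekoA n (m + 1) = kanekoA (n + 1) m - kanekoA n m := by
      have := kanekoA_pascal n m; linarith
    rw [kanekoA_pascal, e3, pow_succ]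
    rw [pow_succ] at e2
    linear_combination -e1 - e2

private lemma kanekoA_half (n : ℕ) : kanekoA n n = 2 * kanekoA (n + 1) n := by
  have hs := kanekoA_symm (n + 1) n
  have hp := kanekoA_pascal n n
  rw [pow_succ] at hs
  have hpow : (-1 : ℚ) ^ n ≠ 0 := by positivity
  have h := mul_left_cancel₀ hpow
    (show (-1 : ℚ) ^ n * (-(kanekoA (n + 1) n)) = (-1 : ℚ) ^ n * kanekoA n (n + 1) by
      linear_combination hs)
  linarith

/-- The von Ettingshausen–Seidel–Kaneko identity: for `n ≥ 1`,
`∑_{k=0}^{n} C(n+1,k) (n+k+1) B_{n+k} = 0`. -/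
theorem kaneko_identity (n : ℕ) (hn : 1 ≤ n) :
    ∑ k ∈ Finset.range (n + 1),
        ((n + 1).choose k : ℚ) * ((n : ℚ) + (k : ℚ) + 1) * bernoulli (n + k) = 0 := by
  have key : ∀ k ∈ Finset.range (n + 1),
      ((n + 1).choose k : ℚ) * ((n : ℚ) + (k : ℚ) + 1) * bernoulli (n + k)
      = (2 * (n : ℚ) + 2) * (((n + 1).choose k : ℚ) * bernoulli (n + k))
        - ((n : ℚ) + 1) * ((n.choose k : ℚ) * bernoulli (n + k)) := by
    intro k hk
    have hk' : k ≤ n := Nat.lt_succ_iff.mp (Finset.mem_range.mp hk)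
    have hc : (n.choose k : ℚ) * ((n : ℚ) + 1) = ((n + 1).choose k : ℚ) * ((n : ℚ) + 1 - k) := by
      have := Nat.choose_mul_succ_eq n k
      have hsub : ((n + 1 - k : ℕ) : ℚ) = (n : ℚ) + 1 - k := by
        rw [Nat.cast_sub (by omega)]; push_cast; ring
      calc (n.choose k : ℚ) * ((n : ℚ) + 1)
          = ((n.choose k * (n + 1) : ℕ) : ℚ) := by push_cast; ring
        _ = (((n + 1).choose k * (n + 1 - k) : ℕ) : ℚ) := by rw [this]
        _ = ((n + 1).choose k : ℚ) * ((n : ℚ) + 1 - k) := by push_cast [hsub]; ring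
    linear_combination bernoulli (n + k) * hc
  rw [Finset.sum_congr rfl key, Finset.sum_sub_distrib, ← Finset.mul_sum, ← Finset.mul_sum]
  have hA1 : ∑ k ∈ Finset.range (n + 1), ((n + 1).choose k : ℚ) * bernoulli (n + k)
      = kanekoA (n + 1) n - bernoulli (2 * n + 1) := by
    unfold kanekoA
    rw [Finset.sum_range_succ ( fun i => ((n+1).choose i : ℚ) * bernoulli (n + i)) (n+1)]
    have : n + (n + 1) = 2 * n + 1 := by omega
    simp [this]
  have hA2 : ∑ k ∈ Finset.range (n + 1), (n.choose k : ℚ) * bernoulli (n + k) = kanekoA n n := rfl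
  rw [hA1, hA2, kanekoA_half]
  have hodd : bernoulli (2 * n + 1) = 0 := by
    rw [bernoulli_eq_bernoulli'_of_ne_one (by omega),
      bernoulli'_eq_zero_of_odd ⟨n, by omega⟩ (by omega)]
  rw [hodd]
  ring
end
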